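/- For each nonzero integer k, the eigenvalues of the matrix C_k = [[0, ik],[ik, 1]] are λ = 1/2 ± i√(k² − 1/4), and the positive definite Hermitian matrix P_k = [[1, −i/(2k)],[i/(2k), 1]] satisfies C_k* P_k + P_k C_k = P_k, with condition number κ(P_k) = (2|k|+1)/(2|k|−1). -/

import Mathlib

open Matrix Complex Finset
open scoped ComplexOrder

private lemma eig_iff' (M : Matrix (Fin 2) (Fin 2) ℂ) (lam : ℂ) :
    (∃ v : Fin 2 → ℂ, v ≠ 0 ∧ M.mulVec v = lam • v) ↔
      (lam • (1 : Matrix (Fin 2) (Fin 2) ℂ) - M).det = 0 := by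
  rw [← Matrix.exists_mulVec_eq_zero_iff]
  apply exists_congr; intro v
  rw [Matrix.sub_mulVec, Matrix.smul_mulVec, Matrix.one_mulVec, sub_eq_zero, eq_comm]

private lemma posdef_quad (c : ℝ) (x : Fin 2 → ℂ) (hc1 : c ≤ 1/2) (hc2 : -(1/2) ≤ c)
    (hx : x ≠ 0) :
    (0:ℂ) <
      star x ⬝ᵥ (!![1, -(c:ℂ) * Complex.I; (c:ℂ) * Complex.I, 1] :
        Matrix (Fin 2) (Fin 2) ℂ).mulVec x := by
  set a := x 0
  set b := x 1
  have hval : star x ⬝ᵥ (!![1, -(c:ℂ) * Complex.I; (c:ℂ) * Complex.I, 1] :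
      Matrix (Fin 2) (Fin 2) ℂ).mulVec x
      = (starRingEnd ℂ) a * a + (starRingEnd ℂ) b * b +
        (c:ℂ) * Complex.I * ((starRingEnd ℂ) b * a - (starRingEnd ℂ) a * b) := by
    simp [Matrix.mulVec, dotProduct, Fin.sum_univ_two, Complex.star_def]
    ring
  have hx01 : a ≠ 0 ∨ b ≠ 0 := by
    by_contra h
    push_neg at h
    exact hx (funext fun i => by fin_cases i <;> [exact h.1; exact h.2])
  have hA : 0 < a.re^2 + a.im^2 + b.re^2 + b.im^2 := by
    rcases hx01 with h | h
    · have := Complex.normSq_pos.mpr h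
      rw [Complex.normSq_apply] at this
      nlinarith [sq_nonneg b.re, sq_nonneg b.im]
    · have := Complex.normSq_pos.mpr h
      rw [Complex.normSq_apply] at this
      nlinarith [sq_nonneg a.re, sq_nonneg a.im]
  rw [hval, Complex.lt_def]
  constructor
  · simp only [Complex.add_re, Complex.sub_re, Complex.sub_im, Complex.mul_re, Complex.mul_im,
      Complex.add_im, Complex.zero_re, Complex.conj_re, Complex.conj_im,
      Complex.I_re, Complex.I_im, Complex.ofReal_re, Complex.ofReal_im]
    ring_nf
    nlinarith [mul_nonneg (by linarith : (0:ℝ) ≤ 1/2 - c) (sq_nonneg (a.re - b.im)),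
      mul_nonneg (by linarith : (0:ℝ) ≤ 1/2 - c) (sq_nonneg (a.im + b.re)),
      mul_nonneg (by linarith : (0:ℝ) ≤ c + 1/2) (sq_nonneg (a.re + b.im)),
      mul_nonneg (by linarith : (0:ℝ) ≤ c + 1/2) (sq_nonneg (a.im - b.re))]
  · simp only [Complex.add_im, Complex.sub_re, Complex.sub_im, Complex.mul_re, Complex.mul_im,
      Complex.zero_im, Complex.conj_re, Complex.conj_im,
      Complex.I_re, Complex.I_im, Complex.ofReal_re, Complex.ofReal_im]
    ring

theorem stmt8 (k : ℤ) (hk : k ≠ 0) :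
    {lam : ℂ | ∃ v : Fin 2 → ℂ, v ≠ 0 ∧
        (!![0, Complex.I * k; Complex.I * k, 1] : Matrix (Fin 2) (Fin 2) ℂ).mulVec v = lam • v}
      = {(1 / 2 : ℂ) + Complex.I * Real.sqrt ((k : ℝ) ^ 2 - 1 / 4),
         (1 / 2 : ℂ) - Complex.I * Real.sqrt ((k : ℝ) ^ 2 - 1 / 4)} ∧
    (!![1, -Complex.I / (2 * k); Complex.I / (2 * k), 1] :
        Matrix (Fin 2) (Fin 2) ℂ).PosDef ∧
    (!![0, Complex.I * k; Complex.I * k, 1] : Matrix (Fin 2) (Fin 2) ℂ)ᴴ *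
        !![1, -Complex.I / (2 * k); Complex.I / (2 * k), 1] +
      !![1, -Complex.I / (2 * k); Complex.I / (2 * k), 1] *
        !![0, Complex.I * k; Complex.I * k, 1]
      = !![1, -Complex.I / (2 * k); Complex.I / (2 * k), 1] ∧
    (∀ lmin lmax : ℝ,
      IsLeast {l : ℝ | ∃ v : Fin 2 → ℂ, v ≠ 0 ∧
          (!![1, -Complex.I / (2 * k); Complex.I / (2 * k), 1] :
            Matrix (Fin 2) (Fin 2) ℂ).mulVec v = (l : ℂ) • v} lmin →
      IsGreatest {l : ℝ | ∃ v : Fin 2 → ℂ, v ≠ 0 ∧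
          (!![1, -Complex.I / (2 * k); Complex.I / (2 * k), 1] :
            Matrix (Fin 2) (Fin 2) ℂ).mulVec v = (l : ℂ) • v} lmax →
      lmax / lmin = (2 * |(k : ℝ)| + 1) / (2 * |(k : ℝ)| - 1)) := by
  have hkc : (k:ℂ) ≠ 0 := Int.cast_ne_zero.mpr hk
  have hK1 : (1:ℝ) ≤ |(k:ℝ)| := by exact_mod_cast (Int.one_le_abs hk : (1:ℤ) ≤ |k|)
  have hk1 : (1:ℝ) ≤ (k:ℝ)^2 := by nlinarith [_root_.sq_abs (k:ℝ)]
  refine ⟨?_, ?_, ?_, ?_⟩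
  · -- eigenvalues of C_k
    set s : ℝ := Real.sqrt ((k : ℝ) ^ 2 - 1 / 4) with hs
    have hs2 : (s:ℂ)^2 = (k:ℂ)^2 - 1/4 := by
      have h : s ^ 2 = (k:ℝ)^2 - 1/4 := Real.sq_sqrt (by nlinarith)
      have := congrArg (Complex.ofReal) h
      push_cast at this
      exact_mod_cast this
    ext lam
    simp only [Set.mem_setOf_eq, Set.mem_insert_iff, Set.mem_singleton_iff, eig_iff']
    have hdet : (lam • (1 : Matrix (Fin 2) (Fin 2) ℂ) - !![0, Complex.I * k; Complex.I * k, 1]).det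
        = (lam - ((1/2 : ℂ) + Complex.I * s)) * (lam - ((1/2 : ℂ) - Complex.I * s)) := by
      simp [Matrix.det_fin_two, Matrix.one_apply]
      linear_combination (-(k:ℂ)^2 + (s:ℂ)^2) * Complex.I_sq - hs2
    rw [hdet, mul_eq_zero, sub_eq_zero, sub_eq_zero]
  · -- positive definiteness of P_k
    set c : ℝ := 1 / (2 * (k:ℝ)) with hc
    have hcb : |c| ≤ 1/2 := by
      rw [hc, abs_div, abs_mul]
      rw [div_le_div_iff₀ (by positivity) (by norm_num)]
      have h2 : |(2:ℝ)| = 2 := abs_of_pos two_pos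
      simp only [abs_one, h2]
      nlinarith
    have hP : (!![1, -Complex.I / (2 * k); Complex.I / (2 * k), 1] :
        Matrix (Fin 2) (Fin 2) ℂ) = !![1, -(c:ℂ) * Complex.I; (c:ℂ) * Complex.I, 1] := by
      have hck : (c : ℂ) = 1 / (2 * (k:ℂ)) := by rw [hc]; push_cast; ring
      ext i j
      fin_cases i <;> fin_cases j <;> simp [hck] <;> field_simp <;> ring
    rw [hP]
    constructor
    · ext i j
      fin_cases i <;> fin_cases j <;>
        simp [Matrix.conjTranspose_apply, Complex.star_def, Complex.ext_iff]
    · intro x hx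
      have := posdef_quad c x (abs_le.mp hcb).2 (abs_le.mp hcb).1
        (fun h => hx (Finsupp.ext fun i => by simpa using congrFun h i))
      convert this using 1
      simp [Finsupp.sum_fintype, dotProduct, Matrix.mulVec, Fin.sum_univ_two, mul_add, mul_assoc]
  · -- the Lyapunov identity
    ext i j
    fin_cases i <;> fin_cases j <;>
      simp [Matrix.mul_apply, Fin.sum_univ_two, Matrix.conjTranspose_apply, Complex.star_def] <;>
      field_simp <;>
      first
        | ring1
        | linear_combination Complex.I_sq
        | linear_combination (-(1:ℂ) - 4*(k:ℂ)^2) * Complex.I_sq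
        | linear_combination (2*(k:ℂ) - 1) * Complex.I_sq
        | linear_combination (1 + 2*(k:ℂ) + 4*(k:ℂ)^2) * Complex.I_sq
        | linear_combination (-(1:ℂ) - 2*(k:ℂ) - 4*(k:ℂ)^2) * Complex.I_sq
        | linear_combination (-4*(k:ℂ)^2) * Complex.I_sq
        | linear_combination (4*(k:ℂ)^2) * Complex.I_sq
        | linear_combination (2*(k:ℂ)) * Complex.I_sq
        | linear_combination (-2*(k:ℂ)) * Complex.I_sq
        | linear_combination (2:ℂ) * Complex.I_sq
        | linear_combination (-2:ℂ) * Complex.I_sq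
  · -- condition number
    set A : ℝ := |(k:ℝ)| with hA
    have hA0 : A ≠ 0 := by positivity
    have hApos : 0 < A := by positivity
    have hAden : 2 * A - 1 ≠ 0 := by nlinarith
    set p : ℝ := 1 - 1 / (2 * A) with hp
    set q : ℝ := 1 + 1 / (2 * A) with hq
    have hinv : 0 < 1 / (2 * A) := by positivity
    have hpq : p ≤ q := by rw [hp, hq]; linarith
    have hSet : {l : ℝ | ∃ v : Fin 2 → ℂ, v ≠ 0 ∧
        (!![1, -Complex.I / (2 * k); Complex.I / (2 * k), 1] :
          Matrix (Fin 2) (Fin 2) ℂ).mulVec v = (l : ℂ) • v} = {p, q} := by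
      ext l
      simp only [Set.mem_setOf_eq, Set.mem_insert_iff, Set.mem_singleton_iff, eig_iff']
      have hdet : (((l:ℂ)) • (1 : Matrix (Fin 2) (Fin 2) ℂ) -
          !![1, -Complex.I / (2 * k); Complex.I / (2 * k), 1]).det
          = (((l - 1)^2 - 1/(4 * (k:ℝ)^2) : ℝ) : ℂ) := by
        simp [Matrix.det_fin_two, Matrix.one_apply]
        push_cast
        field_simp
        first
          | ring1
          | linear_combination (4*(k:ℂ)^2*((l:ℂ)-1)^2) * Complex.I_sq
          | linear_combination (-4*(k:ℂ)^2*((l:ℂ)-1)^2) * Complex.I_sq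
          | linear_combination (4:ℂ) * Complex.I_sq
      rw [hdet]
      rw [show ((((l - 1)^2 - 1/(4 * (k:ℝ)^2) : ℝ)) : ℂ) = 0 ↔
          ((l - 1)^2 - 1/(4 * (k:ℝ)^2) : ℝ) = 0
        from ⟨fun h => by exact_mod_cast h, fun h => by exact_mod_cast h⟩]
      have hfac : (l - 1)^2 - 1/(4 * (k:ℝ)^2) = (l - p) * (l - q) := by
        have h1 : (k:ℝ)^2 = A^2 := (_root_.sq_abs _).symm
        rw [hp, hq, h1]
        field_simp
        ring
      rw [hfac, mul_eq_zero, sub_eq_zero, sub_eq_zero]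
    intro lmin lmax hmin hmax
    rw [hSet] at hmin hmax
    have hminp : lmin = p :=
      hmin.unique ⟨Set.mem_insert _ _, fun x hx => by
        simp only [Set.mem_insert_iff, Set.mem_singleton_iff] at hx
        rcases hx with rfl | rfl
        exacts [le_rfl, hpq]⟩
    have hmaxq : lmax = q :=
      hmax.unique ⟨Set.mem_insert_iff.mpr (Or.inr rfl), fun x hx => by
        simp only [Set.mem_insert_iff, Set.mem_singleton_iff] at hx
        rcases hx with rfl | rfl
        exacts [hpq, le_rfl]⟩
    rw [hminp, hmaxq, hp, hq]
    have h1 : 1 - 1 / (2 * A) ≠ 0 := by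
      intro h
      apply hAden
      field_simp at h
      linarith
    field_simp
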